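/- Let G be a group and w a word such that the set of w-values w{G} is finite. Then for any m ≥ 1, the iterated commutator subgroup [w(G), G, ⁽ᵐ⁾..., G] is finite if and only if [w(G), G] is finite. -/

import Mathlib

def wordValues {k : ℕ} (w : FreeGroup (Fin k)) (G : Type*) [Group G] : Set G :=
  Set.range fun g : Fin k → G => FreeGroup.lift g w

/-- Iterated commutator: `iterComm H 0 = H`, `iterComm H (n+1) = ⁅iterComm H n, G⁆`. -/
def iterComm {G : Type*} [Group G] (H : Subgroup G) : ℕ → Subgroup G
  | 0 => H
  | n + 1 => ⁅iterComm H n, (⊤ : Subgroup G)⁆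

open Subgroup
open scoped commutatorElement
open scoped IsMulCommutative

section Aux

variable {G : Type*} [Group G]

/-- The set of commutators of elements of `A` with arbitrary group elements. -/
def commSet (A : Set G) : Set G := {x | ∃ s ∈ A, ∃ g : G, ⁅s, g⁆ = x}

/-- The iterated commutator sets starting from the word values. -/
def iterSet {k : ℕ} (w : FreeGroup (Fin k)) (G : Type*) [Group G] : ℕ → Set G
  | 0 => wordValues w G
  | n + 1 => commSet (iterSet w G n)

lemma wordValues_conj {k : ℕ} (w : FreeGroup (Fin k)) :
    ∀ x ∈ wordValues w G, ∀ g : G, g * x * g⁻¹ ∈ wordValues w G := by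
  rintro x ⟨f, rfl⟩ g
  refine ⟨fun i => g * f i * g⁻¹, ?_⟩
  have h : (FreeGroup.lift fun i => g * f i * g⁻¹)
      = (MulAut.conj g).toMonoidHom.comp (FreeGroup.lift f) := by
    ext i
    simp
  show FreeGroup.lift (fun i => g * f i * g⁻¹) w = g * FreeGroup.lift f w * g⁻¹
  rw [h]
  simp

lemma commSet_conj {A : Set G} (hA : ∀ x ∈ A, ∀ g : G, g * x * g⁻¹ ∈ A) :
    ∀ x ∈ commSet A, ∀ g : G, g * x * g⁻¹ ∈ commSet A := by
  rintro x ⟨s, hs, h, rfl⟩ g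
  refine ⟨g * s * g⁻¹, hA s hs g, g * h * g⁻¹, ?_⟩
  group

lemma iterSet_conj {k : ℕ} (w : FreeGroup (Fin k)) (n : ℕ) :
    ∀ x ∈ iterSet w G n, ∀ g : G, g * x * g⁻¹ ∈ iterSet w G n := by
  induction n with
  | zero => exact wordValues_conj w
  | succ n ih => exact commSet_conj ih

lemma commSet_finite {A : Set G} (hA : A.Finite)
    (hconj : ∀ x ∈ A, ∀ g : G, g * x * g⁻¹ ∈ A) : (commSet A).Finite := by
  refine (hA.mul hA.inv).subset ?_
  rintro x ⟨s, hs, g, rfl⟩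
  have h : ⁅s, g⁆ = s * (g * s * g⁻¹)⁻¹ := by group
  rw [h]
  exact Set.mul_mem_mul hs (Set.inv_mem_inv.mpr (hconj s hs g))

lemma iterSet_finite {k : ℕ} {w : FreeGroup (Fin k)} (hw : (wordValues w G).Finite)
    (n : ℕ) : (iterSet w G n).Finite := by
  induction n with
  | zero => exact hw
  | succ n ih => exact commSet_finite ih (iterSet_conj w n)

lemma closure_normal_of_conj {A : Set G} (hA : ∀ x ∈ A, ∀ g : G, g * x * g⁻¹ ∈ A) :
    (closure A).Normal := by
  constructor
  intro x hx g
  induction hx using closure_induction with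
  | mem y hy => exact subset_closure (hA y hy g)
  | one => simpa using one_mem _
  | mul y z hy hz ihy ihz =>
      have h : g * (y * z) * g⁻¹ = (g * y * g⁻¹) * (g * z * g⁻¹) := by group
      rw [h]; exact mul_mem ihy ihz
  | inv y hy ih =>
      have h : g * y⁻¹ * g⁻¹ = (g * y * g⁻¹)⁻¹ := by group
      rw [h]; exact inv_mem ih

lemma commutator_closure_eq {A : Set G} (hA : ∀ x ∈ A, ∀ g : G, g * x * g⁻¹ ∈ A) :
    ⁅closure A, (⊤ : Subgroup G)⁆ = closure (commSet A) := by
  have hN : (closure (commSet A)).Normal := closure_normal_of_conj (commSet_conj hA)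
  apply le_antisymm
  · rw [Subgroup.commutator_le]
    intro h hh g _
    induction hh using closure_induction with
    | mem x hx => exact subset_closure ⟨x, hx, g, rfl⟩
    | one =>
        have h1 : ⁅(1 : G), g⁆ = 1 := by group
        rw [h1]; exact one_mem _
    | mul x y hx hy ihx ihy =>
        have h1 : ⁅x * y, g⁆ = (x * ⁅y, g⁆ * x⁻¹) * ⁅x, g⁆ := by group
        rw [h1]
        exact mul_mem (hN.conj_mem _ ihy x) ihx
    | inv x hx ih =>
        have h1 : ⁅x⁻¹, g⁆ = x⁻¹ * ⁅x, g⁆⁻¹ * (x⁻¹)⁻¹ := by group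
        rw [h1]
        exact hN.conj_mem _ (inv_mem ih) x⁻¹
  · rw [closure_le]
    rintro x ⟨s, hs, g, rfl⟩
    exact Subgroup.commutator_mem_commutator (subset_closure hs) (mem_top g)

lemma iterComm_eq_closure {k : ℕ} (w : FreeGroup (Fin k)) (n : ℕ) :
    iterComm (closure (wordValues w G)) n = closure (iterSet w G n) := by
  induction n with
  | zero => rfl
  | succ n ih =>
      show ⁅iterComm (closure (wordValues w G)) n, (⊤ : Subgroup G)⁆ = _
      rw [ih, commutator_closure_eq (iterSet_conj w n)]
      rfl

lemma closure_iterSet_succ_le {k : ℕ} (w : FreeGroup (Fin k)) (n : ℕ) :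
    closure (iterSet w G (n + 1)) ≤ closure (iterSet w G n) := by
  have hN : (closure (iterSet w G n)).Normal := closure_normal_of_conj (iterSet_conj w n)
  rw [closure_le]
  rintro x ⟨s, hs, g, rfl⟩
  have h : ⁅s, g⁆ = s * (g * s⁻¹ * g⁻¹) := by group
  rw [h]
  exact mul_mem (subset_closure hs) (hN.conj_mem _ (inv_mem (subset_closure hs)) g)

lemma exists_pow_conj_eq {A : Set G} (hA : A.Finite)
    (hconj : ∀ x ∈ A, ∀ g : G, g * x * g⁻¹ ∈ A) {s : G} (hs : s ∈ A) (g : G) :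
    ∃ j : ℕ, 1 ≤ j ∧ g ^ j * s * (g ^ j)⁻¹ = s := by
  haveI := hA.to_subtype
  obtain ⟨a, b, hab, h⟩ := Finite.exists_ne_map_eq_of_infinite
    (fun kk : ℕ => (⟨g ^ kk * s * (g ^ kk)⁻¹, hconj s hs (g ^ kk)⟩ : A))
  have h' : g ^ a * s * (g ^ a)⁻¹ = g ^ b * s * (g ^ b)⁻¹ := congrArg Subtype.val h
  rcases hab.lt_or_gt with hlt | hlt
  · refine ⟨b - a, by omega, ?_⟩
    have hgb : g ^ b = g ^ a * g ^ (b - a) := by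
      rw [← pow_add]; congr 1; omega
    have key : (g ^ a * g ^ (b - a)) * s * (g ^ a * g ^ (b - a))⁻¹ = g ^ a * s * (g ^ a)⁻¹ := by
      rw [← hgb]; exact h'.symm
    calc g ^ (b - a) * s * (g ^ (b - a))⁻¹
        = (g ^ a)⁻¹ * ((g ^ a * g ^ (b - a)) * s * (g ^ a * g ^ (b - a))⁻¹) * g ^ a := by group
      _ = (g ^ a)⁻¹ * (g ^ a * s * (g ^ a)⁻¹) * g ^ a := by rw [key]
      _ = s := by group
  · refine ⟨a - b, by omega, ?_⟩
    have hgb : g ^ a = g ^ b * g ^ (a - b) := by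
      rw [← pow_add]; congr 1; omega
    have key : (g ^ b * g ^ (a - b)) * s * (g ^ b * g ^ (a - b))⁻¹ = g ^ b * s * (g ^ b)⁻¹ := by
      rw [← hgb]; exact h'
    calc g ^ (a - b) * s * (g ^ (a - b))⁻¹
        = (g ^ b)⁻¹ * ((g ^ b * g ^ (a - b)) * s * (g ^ b * g ^ (a - b))⁻¹) * g ^ b := by group
      _ = (g ^ b)⁻¹ * (g ^ b * s * (g ^ b)⁻¹) * g ^ b := by rw [key]
      _ = s := by group

lemma commutator_pow_of_central {Q : Type*} [Group Q] (a b : Q)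
    (hc : ∀ q : Q, ⁅a, b⁆ * q = q * ⁅a, b⁆) (j : ℕ) : ⁅a, b ^ j⁆ = ⁅a, b⁆ ^ j := by
  have hcb : Commute ⁅a, b⁆ b := hc b
  have h1 : a * b * a⁻¹ = ⁅a, b⁆ * b := by group
  have h2 : a * b ^ j * a⁻¹ = (⁅a, b⁆ * b) ^ j := by rw [← h1, conj_pow]
  have h3 : (⁅a, b⁆ * b) ^ j = ⁅a, b⁆ ^ j * b ^ j := hcb.mul_pow j
  calc ⁅a, b ^ j⁆ = (a * b ^ j * a⁻¹) * (b ^ j)⁻¹ := by group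
    _ = (⁅a, b⁆ ^ j * b ^ j) * (b ^ j)⁻¹ := by rw [h2, h3]
    _ = ⁅a, b⁆ ^ j := by group

/-- The key step: finiteness of `W_{n+2}` implies finiteness of `W_{n+1}`. -/
lemma step {k : ℕ} {w : FreeGroup (Fin k)} (hw : (wordValues w G).Finite) (n : ℕ)
    (hfin : Finite (closure (iterSet w G (n + 2)))) :
    Finite (closure (iterSet w G (n + 1))) := by
  set W : Subgroup G := closure (iterSet w G (n + 2)) with hW
  haveI hWn : W.Normal := closure_normal_of_conj (iterSet_conj w (n + 2))
  set π : G →* G ⧸ W := QuotientGroup.mk' W with hπ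
  -- elements of `iterSet (n+1)` become central modulo `W`
  have hcen : ∀ t ∈ iterSet w G (n + 1), π t ∈ Subgroup.center (G ⧸ W) := by
    intro t ht
    rw [Subgroup.mem_center_iff]
    intro q
    obtain ⟨h, rfl⟩ := QuotientGroup.mk'_surjective W q
    have hc : ⁅t, h⁆ ∈ W := subset_closure ⟨t, ht, h, rfl⟩
    have h1 : π ⁅t, h⁆ = 1 := (QuotientGroup.eq_one_iff _).mpr hc
    rw [map_commutatorElement] at h1
    have h2 : ⁅π t, π h⁆ * (π h * π t) = π h * π t := by rw [h1, one_mul]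
    have h3 : ⁅π t, π h⁆ * (π h * π t) = π t * π h := by group
    rw [h3] at h2
    exact h2.symm
  -- elements of `iterSet (n+1)` become torsion modulo `W`
  have htor : ∀ t ∈ iterSet w G (n + 1), IsOfFinOrder (π t) := by
    rintro t ⟨s, hs, g, rfl⟩
    obtain ⟨j, hj1, hj⟩ := exists_pow_conj_eq (iterSet_finite hw n) (iterSet_conj w n) hs g
    have hcm : s * g ^ j = g ^ j * s := by
      conv_lhs => rw [← hj]
      group
    have hcomm : ⁅s, g ^ j⁆ = 1 := by
      rw [commutatorElement_def, hcm]
      group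
    have hcentral : ∀ q : G ⧸ W, ⁅π s, π g⁆ * q = q * ⁅π s, π g⁆ := by
      intro q
      have := (Subgroup.mem_center_iff.mp (hcen ⁅s, g⁆ ⟨s, hs, g, rfl⟩)) q
      rw [map_commutatorElement] at this
      exact this.symm
    rw [isOfFinOrder_iff_pow_eq_one]
    refine ⟨j, hj1, ?_⟩
    have : ⁅π s, π g⁆ ^ j = ⁅π s, (π g) ^ j⁆ := (commutator_pow_of_central _ _ hcentral j).symm
    rw [map_commutatorElement, this, ← map_pow, ← map_commutatorElement, hcomm, map_one]
  -- the image of `W_{n+1}` in the quotient is finite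
  set T : Set (G ⧸ W) := π '' iterSet w G (n + 1) with hT
  have hTfin : T.Finite := (iterSet_finite hw (n + 1)).image π
  set C : Subgroup (G ⧸ W) := Subgroup.center (G ⧸ W) with hC
  set T' : Set C := Subtype.val ⁻¹' T with hT'
  have hT'fin : T'.Finite := hTfin.preimage Subtype.val_injective.injOn
  haveI := hT'fin.to_subtype
  haveI hFG : Group.FG (closure T') := Group.closure_finite_fg T'
  have hle : closure T' ≤ CommGroup.torsion C := by
    rw [closure_le]
    rintro x hx
    rw [SetLike.mem_coe, CommGroup.mem_torsion, isOfFinOrder_iff_pow_eq_one]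
    obtain ⟨t, ht, hxt⟩ := hx
    have : IsOfFinOrder (x : G ⧸ W) := by rw [← hxt]; exact htor t ht
    obtain ⟨j, hj1, hj⟩ := isOfFinOrder_iff_pow_eq_one.mp this
    exact ⟨j, hj1, by ext; simpa using hj⟩
  have htors : Monoid.IsTorsion (closure T') := by
    intro x
    have hx : (x : C) ∈ CommGroup.torsion C := hle x.2
    rw [CommGroup.mem_torsion, isOfFinOrder_iff_pow_eq_one] at hx
    obtain ⟨j, hj1, hj⟩ := hx
    rw [isOfFinOrder_iff_pow_eq_one]
    exact ⟨j, hj1, by ext; simpa using congrArg Subtype.val hj⟩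
  haveI hfinT' : Finite (closure T') := CommGroup.finite_of_fg_torsion _ htors
  have hmap : (closure T').map C.subtype = closure T := by
    rw [MonoidHom.map_closure]
    congr 1
    rw [hT']
    rw [Subgroup.coe_subtype]
    exact Set.image_preimage_eq_of_subset
      (by rw [Subtype.range_coe_subtype]; rintro x ⟨t, ht, rfl⟩; exact hcen t ht)
  have hclT : (closure T : Set (G ⧸ W)).Finite := by
    have h5 : ((closure T').map C.subtype : Set (G ⧸ W)).Finite := by
      rw [Subgroup.coe_map]
      exact (Set.toFinite _).image _
    rw [hmap] at h5
    exact h5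
  -- now put things together
  set H : Subgroup G := closure (iterSet w G (n + 1)) with hH
  set f : H →* G ⧸ W := π.comp H.subtype with hf
  have hmap2 : H.map π = closure T := by
    rw [hH, MonoidHom.map_closure, hT]
  have hrange : (f.range : Set (G ⧸ W)) ⊆ (closure T : Set (G ⧸ W)) := by
    rintro x ⟨y, rfl⟩
    rw [SetLike.mem_coe, ← hmap2]
    exact Subgroup.mem_map.mpr ⟨y, y.2, rfl⟩
  haveI hfr : Finite f.range := (hclT.subset hrange).to_subtype
  haveI hq : Finite (H ⧸ f.ker) := Finite.of_equiv _ (QuotientGroup.quotientKerEquivRange f).symm.toEquiv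
  haveI hk : Finite f.ker := by
    haveI : Finite W := hfin
    refine Finite.of_injective (fun x : f.ker => (⟨(x : H), ?_⟩ : W)) ?_
    · have hx : f x = 1 := x.2
      exact (QuotientGroup.eq_one_iff _).mp hx
    · intro x y hxy
      have h1 := Subtype.ext_iff.mp hxy
      exact Subtype.ext (Subtype.ext h1)
  exact Finite.of_equiv _ (Subgroup.groupEquivQuotientProdSubgroup (s := f.ker)).symm

end Aux

theorem iterComm_finite_iff {k : ℕ} {G : Type*} [Group G]
    (w : FreeGroup (Fin k)) (hw : (wordValues w G).Finite) (m : ℕ) (hm : 1 ≤ m) :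
    Finite (iterComm (Subgroup.closure (wordValues w G)) m) ↔
      Finite (⁅Subgroup.closure (wordValues w G), (⊤ : Subgroup G)⁆ : Subgroup G) := by
  have hone : (⁅Subgroup.closure (wordValues w G), (⊤ : Subgroup G)⁆ : Subgroup G)
      = closure (iterSet w G 1) := by
    have := iterComm_eq_closure (G := G) w 1
    simpa [iterComm] using this
  obtain ⟨m', rfl⟩ : ∃ m', m = m' + 1 := ⟨m - 1, by omega⟩
  rw [iterComm_eq_closure, hone]
  constructor
  · intro hfin
    clear hm
    induction m' with
    | zero => exact hfin
    | succ n ih => exact ih (step hw n hfin)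
  · intro hfin
    have hle : closure (iterSet w G (m' + 1)) ≤ closure (iterSet w G 1) := by
      clear hfin hm
      induction m' with
      | zero => exact le_rfl
      | succ n ih => exact (closure_iterSet_succ_le w (n + 1)).trans ih
    have : ((closure (iterSet w G (m' + 1)) : Subgroup G) : Set G).Finite :=
      (Set.toFinite _).subset hle
    exact this.to_subtype
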